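/- Let A ∈ ℝ^{N×N} be symmetric, let σ : Fin N → Fin q be a partition into nonempty clusters of sizes N_k that is equitable for A, and let T ∈ ℝ^{N×N} be orthogonal (TᵀT = T·Tᵀ = I_N) such that there is an injection ι : Fin q → Fin N with row ι(k) of T equal to the normalized indicator of cluster k: T_{ι(k), j} = 1/√N_k if σ j = k and 0 otherwise. Then the matrix B = T·A·Tᵀ has zero entries coupling the parallel and orthogonal coordinates: for every k ∈ Fin q and every r ∈ Fin N not in the range of ι, B_{r, ι(k)} = 0 and B_{ι(k), r} = 0. -/
import Mathlib


open Matrix Finset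

/-- The IRR transformation decouples the parallel and orthogonal coordinates:
for a symmetric matrix `A` with an equitable partition, `B = TATᵀ` has zero
entries coupling the rows/columns indexed by the normalized cluster indicators
with the remaining (orthogonal) rows/columns. -/
theorem stmt_13 (N q : ℕ) (A : Matrix (Fin N) (Fin N) ℝ) (hA : Aᵀ = A)
    (σ : Fin N → Fin q) (hne : Function.Surjective σ)
    (Q : Matrix (Fin q) (Fin q) ℝ)
    (hQ : ∀ (i : Fin N) (l : Fin q),
      ∑ j ∈ univ.filter (fun j => σ j = l), A i j = Q (σ i) l)
    (T : Matrix (Fin N) (Fin N) ℝ) (hT1 : Tᵀ * T = 1) (hT2 : T * Tᵀ = 1)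
    (ι : Fin q → Fin N) (hι : Function.Injective ι)
    (hrow : ∀ (k : Fin q) (j : Fin N), T (ι k) j =
      if σ j = k then 1 / Real.sqrt ((univ.filter (fun i => σ i = k)).card : ℝ) else 0)
    (B : Matrix (Fin N) (Fin N) ℝ) (hB : B = T * A * Tᵀ) :
    ∀ (k : Fin q) (r : Fin N), r ∉ Set.range ι → B r (ι k) = 0 ∧ B (ι k) r = 0 := by
  intro k r hr
  set c : Fin q → ℝ :=
    fun l => 1 / Real.sqrt ((univ.filter (fun i => σ i = l)).card : ℝ) with hc
  have hcard : ∀ l : Fin q, (0:ℝ) < ((univ.filter (fun i => σ i = l)).card : ℝ) := by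
    intro l
    obtain ⟨j, hj⟩ := hne l
    have : j ∈ univ.filter (fun i => σ i = l) := by simp [hj]
    exact_mod_cast Finset.card_pos.mpr ⟨j, this⟩
  have hcne : ∀ l : Fin q, c l ≠ 0 := fun l =>
    one_div_ne_zero (ne_of_gt (Real.sqrt_pos.mpr (hcard l)))
  -- cluster sums of row r of T vanish
  have hperp : ∀ l : Fin q, ∑ j ∈ univ.filter (fun j => σ j = l), T r j = 0 := by
    intro l
    have h0 : (T * Tᵀ) r (ι l) = 0 := by
      rw [hT2]
      have hne' : r ≠ ι l := fun h => hr ⟨l, h.symm⟩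
      simp [Matrix.one_apply, hne']
    rw [Matrix.mul_apply] at h0
    have heq : ∀ j, T r j * Tᵀ j (ι l) = if σ j = l then T r j * c l else 0 := by
      intro j
      rw [Matrix.transpose_apply, hrow]
      split <;> simp [hc]
    rw [Finset.sum_congr rfl (fun j _ => heq j), ← Finset.sum_filter,
      ← Finset.sum_mul] at h0
    exact (mul_eq_zero.mp h0).resolve_right (hcne l)
  -- the main entry
  have hmain : B r (ι k) = 0 := by
    rw [hB, Matrix.mul_apply]
    have heq : ∀ j, (T * A) r j * Tᵀ j (ι k) =
        if σ j = k then (T * A) r j * c k else 0 := by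
      intro j
      rw [Matrix.transpose_apply, hrow]
      split <;> simp [hc]
    rw [Finset.sum_congr rfl (fun j _ => heq j), ← Finset.sum_filter, ← Finset.sum_mul]
    have hsum : ∑ j ∈ univ.filter (fun j => σ j = k), (T * A) r j = 0 := by
      simp only [Matrix.mul_apply]
      rw [Finset.sum_comm]
      have : ∀ i, ∑ j ∈ univ.filter (fun j => σ j = k), T r i * A i j
          = T r i * Q (σ i) k := by
        intro i
        rw [← Finset.mul_sum, hQ]
      rw [Finset.sum_congr rfl (fun i _ => this i)]
      have hfib := Finset.sum_fiberwise_of_maps_to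
        (fun i (_ : i ∈ (univ : Finset (Fin N))) => Finset.mem_univ (σ i))
        (fun i => T r i * Q (σ i) k)
      rw [← hfib]
      refine Finset.sum_eq_zero fun l _ => ?_
      have : ∑ i ∈ univ.filter (fun i => σ i = l), T r i * Q (σ i) k
          = (∑ i ∈ univ.filter (fun i => σ i = l), T r i) * Q l k := by
        rw [Finset.sum_mul]
        refine Finset.sum_congr rfl fun i hi => ?_
        rw [Finset.mem_filter] at hi
        rw [hi.2]
      rw [this, hperp l, zero_mul]
    rw [hsum, zero_mul]
  refine ⟨hmain, ?_⟩
  have hBsymm : Bᵀ = B := by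
    rw [hB]
    simp [Matrix.transpose_mul, Matrix.mul_assoc, hA]
  calc B (ι k) r = Bᵀ r (ι k) := rfl
    _ = B r (ι k) := by rw [hBsymm]
    _ = 0 := hmain
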